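/- Let Δ > 1, A = sqrt(1-Δ^{-2}), B₁, B₃ real. The 4×4 matrix N = [[B₃-A, 0, B₁, 0], [0, 1+B₃, -Δ^{-1}, B₁], [B₁, -Δ^{-1}, 1-B₃, 0], [0, B₁, 0, A-B₃]] has characteristic polynomial q(t) = (t² - 2t - B₁² - B₃² + A²)(t² - B₁² - (B₃-A)²), so its eigenvalues are ±sqrt(B₁² + (B₃-A)²) and 1 ± sqrt(1 + B₁² + B₃² - A²). -/

import Mathlib

open Matrix

/-- The shifted two-site spin-1/2 droplet Hamiltonian `N = 2H^{++}_{[1,2]}(B₁,0,B₃) - A·I`. -/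
noncomputable def dropM (Δ B1 B3 : ℝ) : Matrix (Fin 4) (Fin 4) ℝ :=
  !![B3 - Real.sqrt (1 - Δ⁻¹^2), 0, B1, 0;
     0, 1 + B3, -Δ⁻¹, B1;
     B1, -Δ⁻¹, 1 - B3, 0;
     0, B1, 0, Real.sqrt (1 - Δ⁻¹^2) - B3]

/-- The matrix `N` has characteristic polynomial
`q(t) = (t² - 2t - B₁² - B₃² + A²)(t² - B₁² - (B₃-A)²)`, so its eigenvalues are
`±√(B₁² + (B₃-A)²)` and `1 ± √(1 + B₁² + B₃² - A²)`. -/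
theorem stmt6 (Δ B1 B3 : ℝ) (hΔ : 1 < Δ) :
    (∀ t : ℝ,
      det (t • (1 : Matrix (Fin 4) (Fin 4) ℝ) - dropM Δ B1 B3) =
        (t^2 - 2*t - B1^2 - B3^2 + Real.sqrt (1 - Δ⁻¹^2)^2) *
          (t^2 - B1^2 - (B3 - Real.sqrt (1 - Δ⁻¹^2))^2)) ∧
    (∀ t : ℝ,
      det (t • (1 : Matrix (Fin 4) (Fin 4) ℝ) - dropM Δ B1 B3) = 0 ↔
        t = Real.sqrt (B1^2 + (B3 - Real.sqrt (1 - Δ⁻¹^2))^2) ∨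
        t = -Real.sqrt (B1^2 + (B3 - Real.sqrt (1 - Δ⁻¹^2))^2) ∨
        t = 1 + Real.sqrt (1 + B1^2 + B3^2 - Real.sqrt (1 - Δ⁻¹^2)^2) ∨
        t = 1 - Real.sqrt (1 + B1^2 + B3^2 - Real.sqrt (1 - Δ⁻¹^2)^2)) := by
  have hΔ0 : (0:ℝ) < Δ := lt_trans one_pos hΔ
  have hd1 : Δ⁻¹ < 1 := by
    rw [inv_lt_one_iff₀]; right; exact hΔ
  have hd0 : (0:ℝ) < Δ⁻¹ := inv_pos.mpr hΔ0
  have hnn : (0:ℝ) ≤ 1 - Δ⁻¹^2 := by nlinarith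
  set A := Real.sqrt (1 - Δ⁻¹^2) with hA
  have hA2 : A^2 = 1 - Δ⁻¹^2 := Real.sq_sqrt hnn
  have key : ∀ t : ℝ,
      det (t • (1 : Matrix (Fin 4) (Fin 4) ℝ) - dropM Δ B1 B3) =
        (t^2 - 2*t - B1^2 - B3^2 + A^2) * (t^2 - B1^2 - (B3 - A)^2) := by
    intro t
    simp only [dropM, ← hA]
    rw [show (t • (1 : Matrix (Fin 4) (Fin 4) ℝ) -
        !![B3 - A, 0, B1, 0; 0, 1 + B3, -Δ⁻¹, B1; B1, -Δ⁻¹, 1 - B3, 0;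
           0, B1, 0, A - B3]) =
        !![t - (B3 - A), 0, -B1, 0; 0, t - (1 + B3), Δ⁻¹, -B1;
           -B1, Δ⁻¹, t - (1 - B3), 0; 0, -B1, 0, t - (A - B3)] by
      ext i j; fin_cases i <;> fin_cases j <;>
        simp [Matrix.smul_apply, Matrix.one_apply]]
    simp [Matrix.det_succ_row_zero, Fin.sum_univ_succ, Fin.succAbove]
    linear_combination ((B3 - A)^2 - t^2) * hA2
  refine ⟨key, fun t => ?_⟩
  rw [key t]
  have he : (0:ℝ) ≤ B1^2 + (B3 - A)^2 := by positivity
  have hc : (0:ℝ) ≤ 1 + B1^2 + B3^2 - A^2 := by rw [hA2]; nlinarith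
  set e := Real.sqrt (B1^2 + (B3 - A)^2) with hee
  set c := Real.sqrt (1 + B1^2 + B3^2 - A^2) with hcc
  have he2 : e^2 = B1^2 + (B3 - A)^2 := Real.sq_sqrt he
  have hc2 : c^2 = 1 + B1^2 + B3^2 - A^2 := Real.sq_sqrt hc
  have hfac : (t^2 - 2*t - B1^2 - B3^2 + A^2) * (t^2 - B1^2 - (B3 - A)^2)
      = (t - (1 + c)) * (t - (1 - c)) * ((t - e) * (t - (-e))) := by
    linear_combination (t^2 - B1^2 - (B3-A)^2) * hc2 + ((t-(1+c))*(t-(1-c))) * he2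
  rw [hfac]
  constructor
  · intro h
    rcases mul_eq_zero.mp h with h | h
    · rcases mul_eq_zero.mp h with h | h
      · right; right; left; linarith [sub_eq_zero.mp h]
      · right; right; right; linarith [sub_eq_zero.mp h]
    · rcases mul_eq_zero.mp h with h | h
      · left; linarith [sub_eq_zero.mp h]
      · right; left; linarith [sub_eq_zero.mp h]
  · rintro (rfl | rfl | rfl | rfl) <;> ring
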